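/- Let m ≥ 1 and Z_0 ∈ ℂ with Z_0 ≠ 0. Consider complex scalars i_T, i_R, v_T, v_R, complex column vectors i_I, v_I ∈ ℂ^m, a row vector z_RI ∈ ℂ^{1×m}, a column vector z_IT ∈ ℂ^{m×1}, a scalar z_RT ∈ ℂ, and m×m matrices Z_{II} and Z_I such that Z_I + Z_{II} is invertible. Assume the multiport relations v_T = Z_0 · i_T, v_I = z_IT · i_T + Z_{II} · i_I, v_R = z_RT · i_T + z_RI · i_I + Z_0 · i_R, together with the termination conditions v_I = −Z_I · i_I and v_R = −Z_0 · i_R. Then v_R = h · v_T where h = (1/(2 Z_0)) · ( z_RT − z_RI (Z_I + Z_{II})^{-1} z_IT ). -/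

import Mathlib

open Matrix

/-- Under the multiport relations (unilateral approximation, matched
transmit/receive antennas), with the RIS ports terminated by the reconfigurable impedance
network `Z_I` and the receive antenna terminated by the load `Z₀`, the received voltage
satisfies `v_R = h v_T` with `h = (1/(2 Z₀)) (z_RT − z_RI (Z_I + Z_II)⁻¹ z_IT)`. -/
theorem multiport_channel_formula
    (m : ℕ) (hm : 1 ≤ m) (Z0 : ℂ) (hZ0 : Z0 ≠ 0)
    (iT iR vT vR zRT : ℂ)
    (iI vI zIT zRI : Fin m → ℂ)
    (ZII ZI : Matrix (Fin m) (Fin m) ℂ)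
    (hinv : IsUnit (ZI + ZII))
    (h1 : vT = Z0 * iT)
    (h2 : vI = iT • zIT + ZII *ᵥ iI)
    (h3 : vR = zRT * iT + zRI ⬝ᵥ iI + Z0 * iR)
    (h4 : vI = -(ZI *ᵥ iI))
    (h5 : vR = -(Z0 * iR)) :
    vR = (1 / (2 * Z0)) * (zRT - zRI ⬝ᵥ ((ZI + ZII)⁻¹ *ᵥ zIT)) * vT := by
  have hdet : IsUnit (ZI + ZII).det := (isUnit_iff_isUnit_det _).mp hinv
  have hA : (ZI + ZII) *ᵥ iI = -(iT • zIT) := by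
    have h24 : iT • zIT + ZII *ᵥ iI = -(ZI *ᵥ iI) := h2.symm.trans h4
    rw [add_mulVec]
    funext j
    have := congrFun h24 j
    simp only [Pi.add_apply, Pi.neg_apply, Pi.smul_apply, smul_eq_mul] at this ⊢
    linear_combination this
  have hiI : iI = -(iT • ((ZI + ZII)⁻¹ *ᵥ zIT)) := by
    have : (ZI + ZII)⁻¹ *ᵥ ((ZI + ZII) *ᵥ iI) = iI := by
      rw [mulVec_mulVec, nonsing_inv_mul _ hdet, one_mulVec]
    rw [← this, hA, mulVec_neg, mulVec_smul]
  have h2vR : 2 * vR = zRT * iT + zRI ⬝ᵥ iI := by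
    linear_combination h3 + h5
  have hdot : zRI ⬝ᵥ iI = -(iT * (zRI ⬝ᵥ ((ZI + ZII)⁻¹ *ᵥ zIT))) := by
    rw [hiI, dotProduct_neg, dotProduct_smul, smul_eq_mul]
  have hiT : iT = vT / Z0 := by rw [eq_div_iff hZ0, h1, mul_comm]
  rw [hdot] at h2vR
  have : vR = (zRT * iT - iT * (zRI ⬝ᵥ ((ZI + ZII)⁻¹ *ᵥ zIT))) / 2 := by
    linear_combination h2vR / 2
  rw [this, hiT]
  field_simp
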